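/- Let n ≥ 1, m ≥ 1, α > 0, μ > 0, L ≥ 0, and let f : ℝⁿ → ℝ be L-smooth. Then for every p ∈ ℝⁿ, the second moment of the m-sample estimator satisfies 𝔼[‖(n/(2mα²μ)) • Σ_{i=1}^{m} (f(p + μ•vᵢ) − f(p − μ•vᵢ)) • vᵢ‖²] ≤ (n²/m)·(L·α·μ/2 + ‖∇f(p)‖)² + ((m−1)/m)·(‖∇f(p)‖² + ‖∇f(p)‖·L·n^{3/2}·α·μ + L²·n³·α²·μ²/4), where the expectation is over v₁, …, v_m drawn independently from the uniform probability measure σ_α on the origin-centered sphere of radius α (i.e. the integral over the m-fold product measure σ_α^⊗m). -/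

import Mathlib

open MeasureTheory

section GWAux

variable {n : ℕ}

lemma gw_taylor {n : ℕ} {L : ℝ} (hL : 0 ≤ L) {f : EuclideanSpace ℝ (Fin n) → ℝ}
    (hf : Differentiable ℝ f)
    (hsm : ∀ x y, ‖gradient f x - gradient f y‖ ≤ L * ‖x - y‖)
    (x h : EuclideanSpace ℝ (Fin n)) :
    |f (x + h) - f x - (inner ℝ (gradient f x) h : ℝ)| ≤ L * ‖h‖ ^ 2 / 2 := by
  set φ' : ℝ → ℝ := fun t => (inner ℝ (gradient f (x + t • h)) h : ℝ) with hφ'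
  have hgrad_lip : LipschitzWith (Real.toNNReal L) (gradient f) := by
    apply LipschitzWith.of_dist_le_mul
    intro a b
    rw [dist_eq_norm, dist_eq_norm, Real.coe_toNNReal L hL]
    exact hsm a b
  have hgc : Continuous (gradient f) := hgrad_lip.continuous
  have hline : Continuous fun t : ℝ => x + t • h := by continuity
  have hφ'c : Continuous φ' := (hgc.comp hline).inner continuous_const
  have hderiv : ∀ t ∈ Set.uIcc (0:ℝ) 1, HasDerivAt (fun s : ℝ => f (x + s • h)) (φ' t) t := by
    intro t _
    have hl : HasDerivAt (fun s : ℝ => x + s • h) h t := by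
      simpa using ((hasDerivAt_id t).smul_const h).const_add x
    have hF := (hf (x + t • h)).hasGradientAt.hasFDerivAt
    have := hF.comp_hasDerivAt t hl
    simpa [InnerProductSpace.toDual_apply_apply, φ', gradient, InnerProductSpace.toDual_symm_apply, Function.comp_def] using this
  have hftc : ∫ t in (0:ℝ)..1, φ' t = f (x + h) - f x := by
    have := intervalIntegral.integral_eq_sub_of_hasDerivAt hderiv
      (hφ'c.intervalIntegrable 0 1)
    simpa using this
  have hconst : (inner ℝ (gradient f x) h : ℝ) = ∫ _ in (0:ℝ)..1, (inner ℝ (gradient f x) h : ℝ) := by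
    simp
  rw [← hftc, hconst, ← intervalIntegral.integral_sub (hφ'c.intervalIntegrable 0 1)
    intervalIntegrable_const]
  have hbd : ∀ᵐ t ∂(volume.restrict (Set.uIoc (0:ℝ) 1)),
      ‖φ' t - (inner ℝ (gradient f x) h : ℝ)‖ ≤ L * ‖h‖ ^ 2 * t := by
    rw [ae_restrict_iff' measurableSet_uIoc]
    refine ae_of_all _ fun t ht => ?_
    rw [Set.uIoc_of_le (by norm_num : (0:ℝ) ≤ 1)] at ht
    have ht0 : 0 ≤ t := le_of_lt ht.1
    have : φ' t - (inner ℝ (gradient f x) h : ℝ) = (inner ℝ (gradient f (x + t • h) - gradient f x) h : ℝ) := by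
      rw [inner_sub_left]
    rw [this, Real.norm_eq_abs]
    calc |(inner ℝ (gradient f (x + t • h) - gradient f x) h : ℝ)|
        ≤ ‖gradient f (x + t • h) - gradient f x‖ * ‖h‖ := abs_real_inner_le_norm _ _
      _ ≤ (L * ‖x + t • h - x‖) * ‖h‖ := by
          gcongr; exact hsm _ _
      _ = L * ‖h‖ ^ 2 * t := by
          rw [add_sub_cancel_left, norm_smul, Real.norm_eq_abs, abs_of_nonneg ht0]; ring
  have hgi : IntervalIntegrable (fun t => L * ‖h‖ ^ 2 * t) volume 0 1 := by
    apply Continuous.intervalIntegrable; continuity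
  have := intervalIntegral.norm_integral_le_of_norm_le zero_le_one (by rw [Set.uIoc_of_le zero_le_one] at hbd; exact (ae_restrict_iff' measurableSet_Ioc).mp hbd) hgi
  rw [Real.norm_eq_abs] at this
  refine this.trans ?_
  rw [intervalIntegral.integral_const_mul, integral_id]
  nlinarith [sq_nonneg ‖h‖, norm_nonneg h]

lemma gw_coord_le_norm (v : EuclideanSpace ℝ (Fin n)) (j : Fin n) : |v j| ≤ ‖v‖ := by
  rw [EuclideanSpace.norm_eq]
  have h1 : |v j| = Real.sqrt (|v j| ^ 2) := by
    rw [Real.sqrt_sq (abs_nonneg _)]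
  rw [h1]
  apply Real.sqrt_le_sqrt
  exact Finset.single_le_sum (f := fun i => |v i| ^ 2) (fun i _ => by positivity) (Finset.mem_univ j)

lemma gw_coord_cont (j : Fin n) : Continuous fun v : EuclideanSpace ℝ (Fin n) => v j :=
  (EuclideanSpace.proj j).continuous

lemma gw_change_of_var (σ : Measure (EuclideanSpace ℝ (Fin n)))
    (hσ_rot : ∀ R : EuclideanSpace ℝ (Fin n) ≃ₗᵢ[ℝ] EuclideanSpace ℝ (Fin n),
      Measure.map R σ = σ)
    (R : EuclideanSpace ℝ (Fin n) ≃ₗᵢ[ℝ] EuclideanSpace ℝ (Fin n))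
    {h : EuclideanSpace ℝ (Fin n) → ℝ} (hc : Continuous h) :
    ∫ v, h v ∂σ = ∫ v, h (R v) ∂σ := by
  conv_lhs => rw [← hσ_rot R]
  rw [integral_map (R.continuous.measurable.aemeasurable) hc.aestronglyMeasurable]

lemma gw_isotropy (hn : 1 ≤ n) {α : ℝ} (hα : 0 < α)
    (σ : Measure (EuclideanSpace ℝ (Fin n))) [IsProbabilityMeasure σ]
    (hσ_sphere : ∀ᵐ v ∂σ, ‖v‖ = α)
    (hσ_rot : ∀ R : EuclideanSpace ℝ (Fin n) ≃ₗᵢ[ℝ] EuclideanSpace ℝ (Fin n),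
      Measure.map R σ = σ)
    (j k : Fin n) :
    ∫ v, v j * v k ∂σ = if j = k then α ^ 2 / n else 0 := by
  by_cases hjk : j = k
  · subst hjk
    simp only [if_pos rfl]
    have hsame : ∀ i : Fin n, ∫ v, v i * v i ∂σ = ∫ v, v j * v j ∂σ := by
      intro i
      have hcv := gw_change_of_var σ hσ_rot (LinearIsometryEquiv.piLpCongrLeft 2 ℝ ℝ (Equiv.swap i j))
        ((gw_coord_cont i).mul (gw_coord_cont i))
      have happ : ∀ v : EuclideanSpace ℝ (Fin n),
          (LinearIsometryEquiv.piLpCongrLeft 2 ℝ ℝ (Equiv.swap i j) v) i = v j := by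
        intro v
        rw [LinearIsometryEquiv.piLpCongrLeft_apply]
        simp [Equiv.piCongrLeft']
      simp only [Pi.mul_apply] at hcv; rw [hcv]
      simp_rw [happ]
    have hint : ∀ (a b : Fin n), Integrable (fun v : EuclideanSpace ℝ (Fin n) => v a * v b) σ := by
      intro a b
      refine Integrable.mono' (integrable_const (α * α))
        ((gw_coord_cont a).mul (gw_coord_cont b)).aestronglyMeasurable ?_
      filter_upwards [hσ_sphere] with v hv
      rw [Real.norm_eq_abs, abs_mul]
      calc |v a| * |v b| ≤ ‖v‖ * ‖v‖ :=
            mul_le_mul (gw_coord_le_norm v a) (gw_coord_le_norm v b) (abs_nonneg _) (norm_nonneg _)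
        _ = α * α := by rw [hv]
    have hsum : ∑ i : Fin n, ∫ v, v i * v i ∂σ = α ^ 2 := by
      rw [← integral_finset_sum _ (fun i _ => hint i i)]
      have : ∀ᵐ v ∂σ, ∑ i : Fin n, v i * v i = α ^ 2 := by
        filter_upwards [hσ_sphere] with v hv
        have : ∑ i : Fin n, v i * v i = ‖v‖ ^ 2 := by
          rw [EuclideanSpace.norm_eq, Real.sq_sqrt (by positivity)]
          simp [sq_abs, sq]
        rw [this, hv]
      rw [integral_congr_ae this, integral_const]
      simp
    have := hsum
    simp_rw [hsame] at this
    rw [Finset.sum_const, Finset.card_univ, Fintype.card_fin, nsmul_eq_mul] at this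
    have hn0 : (0:ℝ) < n := by exact_mod_cast hn
    simp only [↓reduceIte]
    rw [eq_div_iff hn0.ne']
    linarith [this]
  · simp only [if_neg hjk]
    set R := LinearIsometryEquiv.piLpCongrRight 2
      (fun i : Fin n => if i = j then LinearIsometryEquiv.neg ℝ (E := ℝ) else LinearIsometryEquiv.refl ℝ ℝ)
    have hcv := gw_change_of_var σ hσ_rot R ((gw_coord_cont j).mul (gw_coord_cont k))
    have happj : ∀ v : EuclideanSpace ℝ (Fin n), (R v) j = -(v j) := by
      intro v
      simp [R, LinearIsometryEquiv.piLpCongrRight_apply]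
    have happk : ∀ v : EuclideanSpace ℝ (Fin n), (R v) k = v k := by
      intro v
      simp [R, LinearIsometryEquiv.piLpCongrRight_apply, hjk, (Ne.symm hjk)]
    have : ∫ v, v j * v k ∂σ = -∫ v, v j * v k ∂σ := by
      simp only [Pi.mul_apply] at hcv
      conv_lhs => rw [hcv]
      simp_rw [happj, happk, neg_mul]
      rw [integral_neg]
    linarith [this]

lemma gw_pi_integral {n m : ℕ} (σ : Measure (EuclideanSpace ℝ (Fin n))) [IsProbabilityMeasure σ]
    (F : Fin m → EuclideanSpace ℝ (Fin n) → ℝ) :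
    ∫ x : Fin m → EuclideanSpace ℝ (Fin n), ∏ c, F c (x c) ∂(Measure.pi fun _ => σ)
      = ∏ c, ∫ y, F c y ∂σ := by
  letI : MeasureSpace (EuclideanSpace ℝ (Fin n)) := ⟨σ⟩
  have h := MeasureTheory.integral_fintype_prod_eq_prod (𝕜 := ℝ) F (μ := fun _ => σ)
  exact h

end GWAux

set_option maxHeartbeats 1000000 in
/-- For an `L`-smooth `f : ℝⁿ → ℝ`, the second moment of the `m`-sample
ensembled two-point zeroth-order gradient estimator is at most
`(n²/m)·(Lαμ/2 + ‖∇f(p)‖)² + ((m−1)/m)·(‖∇f(p)‖² + ‖∇f(p)‖·L·n^{3/2}·α·μ + L²n³α²μ²/4)`. -/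
theorem gw_estimator_second_moment_ensembled
    (n m : ℕ) (hn : 1 ≤ n) (hm : 1 ≤ m) (α μ L : ℝ) (hα : 0 < α) (hμ : 0 < μ) (hL : 0 ≤ L)
    (σ : Measure (EuclideanSpace ℝ (Fin n))) [IsProbabilityMeasure σ]
    (hσ_sphere : ∀ᵐ v ∂σ, ‖v‖ = α)
    (hσ_rot : ∀ R : EuclideanSpace ℝ (Fin n) ≃ₗᵢ[ℝ] EuclideanSpace ℝ (Fin n),
      Measure.map R σ = σ)
    (f : EuclideanSpace ℝ (Fin n) → ℝ)
    (hf_diff : Differentiable ℝ f)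
    (hf_smooth : ∀ x y, ‖gradient f x - gradient f y‖ ≤ L * ‖x - y‖)
    (p : EuclideanSpace ℝ (Fin n)) :
    ∫ v, ‖((n : ℝ) / (2 * m * α ^ 2 * μ)) •
            ∑ i : Fin m, (f (p + μ • v i) - f (p - μ • v i)) • v i‖ ^ 2
        ∂(Measure.pi fun _ : Fin m => σ)
      ≤ (n : ℝ) ^ 2 / m * (L * α * μ / 2 + ‖gradient f p‖) ^ 2
          + ((m : ℝ) - 1) / m *
              (‖gradient f p‖ ^ 2 + ‖gradient f p‖ * L * (n : ℝ) ^ ((3 : ℝ) / 2) * α * μ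
                + L ^ 2 * (n : ℝ) ^ 3 * α ^ 2 * μ ^ 2 / 4) := by
  classical
  have hn0 : (0:ℝ) < n := by exact_mod_cast hn
  have hm0 : (0:ℝ) < m := by exact_mod_cast hm
  set u := gradient f p with hu
  set c : ℝ := (n:ℝ) / (2 * α ^ 2 * μ) with hc
  have hc0 : 0 < c := by positivity
  set g : Fin n → EuclideanSpace ℝ (Fin n) → ℝ :=
    fun k v => c * (f (p + μ • v) - f (p - μ • v)) * v k with hg
  set r : EuclideanSpace ℝ (Fin n) → ℝ :=
    fun v => f (p + μ • v) - f (p - μ • v) - 2 * μ * (inner ℝ u v : ℝ) with hr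
  set B : ℝ := n * (L * α * μ / 2 + ‖u‖) with hB
  set D : ℝ := L * n * α * μ / 2 with hD
  have hB0 : 0 ≤ B := by positivity
  have hD0 : 0 ≤ D := by positivity
  -- continuity facts
  have hfc : Continuous f := hf_diff.continuous
  have hl1 : Continuous fun v : EuclideanSpace ℝ (Fin n) => p + μ • v :=
    continuous_const.add (continuous_id.const_smul μ)
  have hl2 : Continuous fun v : EuclideanSpace ℝ (Fin n) => p - μ • v :=
    continuous_const.sub (continuous_id.const_smul μ)
  have hdc : Continuous fun v : EuclideanSpace ℝ (Fin n) =>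
      f (p + μ • v) - f (p - μ • v) := (hfc.comp hl1).sub (hfc.comp hl2)
  have hgcont : ∀ k, Continuous (g k) := fun k =>
    (continuous_const.mul hdc).mul (gw_coord_cont k)
  have hrcont : Continuous r :=
    hdc.sub (continuous_const.mul (continuous_const.inner continuous_id))
  -- Taylor estimates
  have hkey : ∀ v : EuclideanSpace ℝ (Fin n), ‖v‖ = α → |r v| ≤ L * μ ^ 2 * α ^ 2 := by
    intro v hv
    have t1 := gw_taylor hL hf_diff hf_smooth p (μ • v)
    have t2 := gw_taylor hL hf_diff hf_smooth p (-(μ • v))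
    have hnrm : ‖μ • v‖ = μ * α := by
      rw [norm_smul, Real.norm_eq_abs, abs_of_pos hμ, hv]
    have hnrm' : ‖-(μ • v)‖ = μ * α := by rw [norm_neg, hnrm]
    rw [hnrm] at t1; rw [hnrm'] at t2
    have e1 : p + -(μ • v) = p - μ • v := (sub_eq_add_neg p (μ • v)).symm
    rw [e1] at t2
    have e2 : (inner ℝ u (μ • v) : ℝ) = μ * (inner ℝ u v : ℝ) := real_inner_smul_right u v μ
    have e3 : (inner ℝ u (-(μ • v)) : ℝ) = -(μ * (inner ℝ u v : ℝ)) := by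
      rw [inner_neg_right, e2]
    rw [e2] at t1; rw [e3] at t2
    have hre : r v = (f (p + μ • v) - f p - μ * (inner ℝ u v : ℝ))
        - (f (p - μ • v) - f p - -(μ * (inner ℝ u v : ℝ))) := by
      rw [hr]; ring
    rw [hre]
    calc |(f (p + μ • v) - f p - μ * (inner ℝ u v : ℝ))
        - (f (p - μ • v) - f p - -(μ * (inner ℝ u v : ℝ)))|
        ≤ |f (p + μ • v) - f p - μ * (inner ℝ u v : ℝ)|
          + |f (p - μ • v) - f p - -(μ * (inner ℝ u v : ℝ))| := abs_sub _ _
      _ ≤ L * (μ * α) ^ 2 / 2 + L * (μ * α) ^ 2 / 2 := add_le_add t1 t2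
      _ = L * μ ^ 2 * α ^ 2 := by ring
  have hinner_bd : ∀ v : EuclideanSpace ℝ (Fin n), ‖v‖ = α →
      |(inner ℝ u v : ℝ)| ≤ ‖u‖ * α := by
    intro v hv
    calc |(inner ℝ u v : ℝ)| ≤ ‖u‖ * ‖v‖ := abs_real_inner_le_norm u v
      _ = ‖u‖ * α := by rw [hv]
  have hdiffb : ∀ v : EuclideanSpace ℝ (Fin n), ‖v‖ = α →
      |f (p + μ • v) - f (p - μ • v)| ≤ 2 * μ * α * ‖u‖ + L * μ ^ 2 * α ^ 2 := by
    intro v hv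
    have hsplit : f (p + μ • v) - f (p - μ • v) = r v + 2 * μ * (inner ℝ u v : ℝ) := by
      rw [hr]; ring
    rw [hsplit]
    calc |r v + 2 * μ * (inner ℝ u v : ℝ)| ≤ |r v| + |2 * μ * (inner ℝ u v : ℝ)| := abs_add_le _ _
      _ ≤ L * μ ^ 2 * α ^ 2 + 2 * μ * (‖u‖ * α) := by
          refine add_le_add (hkey v hv) ?_
          rw [abs_mul, abs_of_pos (by positivity : (0:ℝ) < 2 * μ)]
          exact mul_le_mul_of_nonneg_left (hinner_bd v hv) (by positivity)
      _ = 2 * μ * α * ‖u‖ + L * μ ^ 2 * α ^ 2 := by ring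
  have hsumsq : ∀ v : EuclideanSpace ℝ (Fin n), ∑ k, v k ^ 2 = ‖v‖ ^ 2 := by
    intro v
    rw [EuclideanSpace.norm_eq, Real.sq_sqrt (by positivity)]
    simp [sq_abs]
  have hcB : c * (2 * μ * α * ‖u‖ + L * μ ^ 2 * α ^ 2) * α = B := by
    rw [hc, hB]; field_simp; ring
  have hgB : ∀ v : EuclideanSpace ℝ (Fin n), ‖v‖ = α → ∑ k, g k v ^ 2 ≤ B ^ 2 := by
    intro v hv
    have h0 : ∑ k, g k v ^ 2 = (c * (f (p + μ • v) - f (p - μ • v))) ^ 2 * ∑ k, v k ^ 2 := by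
      rw [Finset.mul_sum]; refine Finset.sum_congr rfl fun k _ => ?_; rw [hg]; ring
    rw [h0, hsumsq, hv]
    have h1 : (c * (f (p + μ • v) - f (p - μ • v))) ^ 2 * α ^ 2
        = (c * |f (p + μ • v) - f (p - μ • v)| * α) ^ 2 := by
      rw [mul_pow, mul_pow, mul_pow, sq_abs]
    rw [h1, ← hcB]
    have hb0 : 0 ≤ c * |f (p + μ • v) - f (p - μ • v)| * α := by positivity
    refine pow_le_pow_left₀ hb0 ?_ 2
    exact mul_le_mul_of_nonneg_right
      (mul_le_mul_of_nonneg_left (hdiffb v hv) hc0.le) hα.le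
  have hgb1 : ∀ v : EuclideanSpace ℝ (Fin n), ‖v‖ = α → ∀ k, |g k v| ≤ B := by
    intro v hv k
    have h1 : g k v ^ 2 ≤ B ^ 2 := by
      refine le_trans ?_ (hgB v hv)
      exact Finset.single_le_sum (f := fun k => g k v ^ 2) (fun i _ => sq_nonneg _)
        (Finset.mem_univ k)
    have h2 : |g k v| = Real.sqrt (g k v ^ 2) := (Real.sqrt_sq_eq_abs _).symm
    rw [h2, ← Real.sqrt_sq hB0]
    exact Real.sqrt_le_sqrt h1
  -- integrability on σ
  have hbound_int : ∀ {h : EuclideanSpace ℝ (Fin n) → ℝ}, Continuous h → ∀ (C : ℝ),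
      (∀ v, ‖v‖ = α → |h v| ≤ C) → Integrable h σ := by
    intro h hc' C hb
    refine Integrable.mono' (integrable_const C) hc'.aestronglyMeasurable ?_
    filter_upwards [hσ_sphere] with v hv
    rw [Real.norm_eq_abs]; exact hb v hv
  have hgint : ∀ k, Integrable (g k) σ :=
    fun k => hbound_int (hgcont k) B (fun v hv => hgb1 v hv k)
  have hg2int : ∀ k, Integrable (fun v => g k v ^ 2) σ := by
    intro k
    refine hbound_int ((hgcont k).pow 2) (B ^ 2) fun v hv => ?_
    rw [abs_pow]
    exact pow_le_pow_left₀ (abs_nonneg _) (hgb1 v hv k) 2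
  have hrvint : ∀ k, Integrable (fun v => r v * v k) σ := by
    intro k
    refine hbound_int (hrcont.mul (gw_coord_cont k)) (L * μ ^ 2 * α ^ 2 * α) fun v hv => ?_
    rw [abs_mul]
    refine mul_le_mul (hkey v hv) ?_ (abs_nonneg _) (by positivity)
    rw [← hv]; exact gw_coord_le_norm v k
  have hvvint : ∀ a b : Fin n,
      Integrable (fun v : EuclideanSpace ℝ (Fin n) => v a * v b) σ := by
    intro a b
    refine hbound_int ((gw_coord_cont a).mul (gw_coord_cont b)) (α * α) fun v hv => ?_
    rw [abs_mul]
    exact mul_le_mul (hv ▸ gw_coord_le_norm v a) (hv ▸ gw_coord_le_norm v b)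
      (abs_nonneg _) hα.le
  have hivint : ∀ k : Fin n,
      Integrable (fun v : EuclideanSpace ℝ (Fin n) => (inner ℝ u v : ℝ) * v k) σ := by
    intro k
    refine hbound_int ((continuous_const.inner continuous_id).mul (gw_coord_cont k))
      (‖u‖ * α * α) fun v hv => ?_
    rw [abs_mul]
    exact mul_le_mul (hinner_bd v hv) (hv ▸ gw_coord_le_norm v k) (abs_nonneg _)
      (by positivity)
  set I1 : Fin n → ℝ := fun k => ∫ v, g k v ∂σ with hI1
  set I2 : Fin n → ℝ := fun k => ∫ v, g k v ^ 2 ∂σ with hI2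
  set ρ : Fin n → ℝ := fun k => ∫ v, r v * v k ∂σ with hρdef
  have hI1k : ∀ k, I1 k = u k + c * ρ k := by
    intro k
    have hsplit : ∀ v : EuclideanSpace ℝ (Fin n),
        g k v = (2 * μ * c) * ((inner ℝ u v : ℝ) * v k) + c * (r v * v k) := by
      intro v; rw [hg, hr]; ring
    have hiso : ∫ v, (inner ℝ u v : ℝ) * v k ∂σ = α ^ 2 / n * u k := by
      have hrepr : ∀ v : EuclideanSpace ℝ (Fin n),
          (inner ℝ u v : ℝ) * v k = ∑ j, u j * (v j * v k) := by
        intro v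
        have hq : (inner ℝ u v : ℝ) = ∑ j, u j * v j := by
          simp [PiLp.inner_apply, RCLike.inner_apply, mul_comm]
        rw [hq, Finset.sum_mul]
        exact Finset.sum_congr rfl fun j _ => by ring
      simp_rw [hrepr]
      rw [integral_finset_sum _ (fun j _ => (hvvint j k).const_mul (u j))]
      have h6 : ∀ j : Fin n, ∫ v, u j * (v j * v k) ∂σ
          = if j = k then u j * (α ^ 2 / n) else 0 := by
        intro j
        rw [integral_const_mul, gw_isotropy hn hα σ hσ_sphere hσ_rot j k]
        by_cases hjk : j = k <;> simp [hjk]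
      simp_rw [h6]
      rw [Finset.sum_ite_eq' Finset.univ k (fun j => u j * (α ^ 2 / n))]
      simp [mul_comm]
    have h7 : I1 k = (2 * μ * c) * (α ^ 2 / n * u k) + c * ρ k := by
      rw [hI1]
      simp only
      rw [integral_congr_ae (ae_of_all _ hsplit),
        integral_add ((hivint k).const_mul _) ((hrvint k).const_mul c),
        integral_const_mul, integral_const_mul, hiso]
    rw [h7, hc]
    field_simp
  have hρb : ∀ k, |ρ k| ≤ L * μ ^ 2 * α ^ 2 * α := by
    intro k
    have h1 : |ρ k| ≤ ∫ v, |r v * v k| ∂σ := by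
      rw [hρdef]
      have := norm_integral_le_integral_norm (μ := σ)
        (fun v : EuclideanSpace ℝ (Fin n) => r v * v k)
      simpa only [Real.norm_eq_abs] using this
    refine h1.trans ?_
    have h2 : ∫ v, |r v * v k| ∂σ ≤ ∫ _v, L * μ ^ 2 * α ^ 2 * α ∂σ := by
      refine integral_mono_ae (hrvint k).abs (integrable_const _) ?_
      filter_upwards [hσ_sphere] with v hv
      rw [abs_mul]
      refine mul_le_mul (hkey v hv) (hv ▸ gw_coord_le_norm v k) (abs_nonneg _)
        (by positivity)
    simpa using h2
  have hI2sum : ∑ k, I2 k ≤ B ^ 2 := by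
    rw [hI2]
    simp only
    rw [← integral_finset_sum _ (fun k _ => hg2int k)]
    have h1 : ∫ v, ∑ k, g k v ^ 2 ∂σ ≤ ∫ _v, B ^ 2 ∂σ := by
      refine integral_mono_ae (integrable_finset_sum _ (fun k _ => hg2int k))
        (integrable_const _) ?_
      filter_upwards [hσ_sphere] with v hv using hgB v hv
    simpa using h1
  have hI1sq : ∑ k, I1 k ^ 2 ≤ (‖u‖ + Real.sqrt n * D) ^ 2 := by
    set w : EuclideanSpace ℝ (Fin n) := (WithLp.equiv 2 (Fin n → ℝ)).symm
      (fun k => c * ρ k) with hw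
    have hwk : ∀ k, w k = c * ρ k := fun k => rfl
    have hsum : ∑ k, I1 k ^ 2 = ‖u + w‖ ^ 2 := by
      rw [← hsumsq (u + w)]
      refine Finset.sum_congr rfl fun k _ => ?_
      have hadd : (u + w) k = u k + w k := rfl
      rw [hadd, hwk, ← hI1k]
    rw [hsum]
    have hwnorm : ‖w‖ ≤ Real.sqrt n * D := by
      have h2 : ‖w‖ ^ 2 ≤ (n:ℝ) * D ^ 2 := by
        rw [← hsumsq w]
        calc ∑ k, w k ^ 2 ≤ ∑ _k : Fin n, D ^ 2 := by
              refine Finset.sum_le_sum fun k _ => ?_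
              rw [hwk]
              have h3 : |c * ρ k| ≤ D := by
                rw [abs_mul, abs_of_pos hc0]
                calc c * |ρ k| ≤ c * (L * μ ^ 2 * α ^ 2 * α) :=
                      mul_le_mul_of_nonneg_left (hρb k) hc0.le
                  _ = D := by rw [hc, hD]; field_simp
              calc (c * ρ k) ^ 2 = |c * ρ k| ^ 2 := (sq_abs _).symm
                _ ≤ D ^ 2 := pow_le_pow_left₀ (abs_nonneg _) h3 2
          _ = (n:ℝ) * D ^ 2 := by rw [Finset.sum_const]; simp [nsmul_eq_mul]
      have h4 : ‖w‖ = Real.sqrt (‖w‖ ^ 2) := by rw [Real.sqrt_sq (norm_nonneg _)]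
      rw [h4]
      calc Real.sqrt (‖w‖ ^ 2) ≤ Real.sqrt ((n : ℝ) * D ^ 2) := Real.sqrt_le_sqrt h2
        _ = Real.sqrt n * D := by
            rw [Real.sqrt_mul (by positivity) (D ^ 2), Real.sqrt_sq hD0]
    calc ‖u + w‖ ^ 2 ≤ (‖u‖ + ‖w‖) ^ 2 :=
          pow_le_pow_left₀ (norm_nonneg _) (norm_add_le u w) 2
      _ ≤ (‖u‖ + Real.sqrt n * D) ^ 2 :=
          pow_le_pow_left₀ (by positivity) (add_le_add le_rfl hwnorm) 2
  -- product-measure computations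
  have hSm : MeasurableSet {v : EuclideanSpace ℝ (Fin n) | ‖v‖ = α} :=
    (isClosed_eq continuous_norm continuous_const).measurableSet
  have hπae : ∀ᵐ x ∂(Measure.pi fun _ : Fin m => σ), ∀ i, ‖x i‖ = α := by
    have hS1 : σ {v : EuclideanSpace ℝ (Fin n) | ‖v‖ = α} = 1 := by
      rw [← prob_compl_eq_zero_iff hSm]
      exact ae_iff.mp hσ_sphere
    have hpi : (Measure.pi fun _ : Fin m => σ)
        (Set.pi Set.univ fun _ : Fin m => {v : EuclideanSpace ℝ (Fin n) | ‖v‖ = α}) = 1 := by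
      rw [Measure.pi_pi]
      simp [hS1]
    rw [ae_iff]
    have hset : {x : Fin m → EuclideanSpace ℝ (Fin n) | ¬ ∀ i, ‖x i‖ = α}
        = (Set.pi Set.univ fun _ : Fin m => {v : EuclideanSpace ℝ (Fin n) | ‖v‖ = α})ᶜ := by
      ext x
      simp [Set.mem_pi]
    rw [hset, prob_compl_eq_zero_iff (MeasurableSet.univ_pi fun _ => hSm)]
    exact hpi
  have hπint : ∀ (k : Fin n) (i j : Fin m),
      Integrable (fun x : Fin m → EuclideanSpace ℝ (Fin n) => g k (x i) * g k (x j))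
        (Measure.pi fun _ : Fin m => σ) := by
    intro k i j
    refine Integrable.mono' (integrable_const (B * B))
      (((hgcont k).comp (continuous_apply i)).mul
        ((hgcont k).comp (continuous_apply j))).aestronglyMeasurable ?_
    filter_upwards [hπae] with x hx
    rw [Real.norm_eq_abs, abs_mul]
    exact mul_le_mul (hgb1 _ (hx i) k) (hgb1 _ (hx j) k) (abs_nonneg _) hB0
  have hmulI2 : ∀ k, ∫ y, g k y * g k y ∂σ = I2 k := by
    intro k
    rw [hI2]
    simp only
    refine integral_congr_ae (ae_of_all _ fun y => ?_)
    show g k y * g k y = g k y ^ 2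
    rw [pow_two]
  have hterm : ∀ (k : Fin n) (i j : Fin m),
      ∫ x, g k (x i) * g k (x j) ∂(Measure.pi fun _ : Fin m => σ)
        = if i = j then I2 k else I1 k ^ 2 := by
    intro k i j
    have hF := gw_pi_integral σ
      (fun d y => (if d = i then g k y else 1) * (if d = j then g k y else 1))
    have hLfac : ∀ x : Fin m → EuclideanSpace ℝ (Fin n),
        (∏ d, (if d = i then g k (x d) else 1) * (if d = j then g k (x d) else 1))
          = g k (x i) * g k (x j) := by
      intro x
      rw [Finset.prod_mul_distrib,
        Finset.prod_ite_eq' Finset.univ i (fun d => g k (x d)),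
        Finset.prod_ite_eq' Finset.univ j (fun d => g k (x d))]
      simp
    have hfac : ∀ d : Fin m,
        ∫ y, (if d = i then g k y else 1) * (if d = j then g k y else 1) ∂σ
          = if d = i then (if d = j then I2 k else I1 k)
            else (if d = j then I1 k else 1) := by
      intro d
      by_cases hdi : d = i
      · subst hdi
        by_cases hdj : d = j
        · subst hdj
          simp [hmulI2 k]
        · simp [hdj, hI1]
      · by_cases hdj : d = j
        · subst hdj
          simp [hdi, hI1]
        · simp [hdi, hdj]
    simp_rw [hLfac] at hF
    rw [hF]
    rw [Finset.prod_congr rfl fun d _ => hfac d]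
    by_cases hij : i = j
    · subst hij
      have : ∀ d : Fin m,
          (if d = i then (if d = i then I2 k else I1 k) else (if d = i then I1 k else 1))
            = (if d = i then I2 k else 1) := by
        intro d; by_cases hdi : d = i <;> simp [hdi]
      rw [Finset.prod_congr rfl fun d _ => this d,
        Finset.prod_ite_eq' Finset.univ i (fun _ => I2 k)]
      simp
    · have : ∀ d : Fin m,
          (if d = i then (if d = j then I2 k else I1 k) else (if d = j then I1 k else 1))
            = (if d = i then I1 k else 1) * (if d = j then I1 k else 1) := by
        intro d
        by_cases hdi : d = i
        · subst hdi; simp [hij]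
        · by_cases hdj : d = j
          · subst hdj; simp [hdi]
          · simp [hdi, hdj]
      rw [Finset.prod_congr rfl fun d _ => this d, Finset.prod_mul_distrib,
        Finset.prod_ite_eq' Finset.univ i (fun _ => I1 k),
        Finset.prod_ite_eq' Finset.univ j (fun _ => I1 k)]
      simp [hij, sq]
  -- pointwise rewriting of the integrand
  have hpt : ∀ x : Fin m → EuclideanSpace ℝ (Fin n),
      ‖((n : ℝ) / (2 * m * α ^ 2 * μ)) •
          ∑ i : Fin m, (f (p + μ • x i) - f (p - μ • x i)) • x i‖ ^ 2
        = (1 / (m:ℝ) ^ 2) * ∑ k, ∑ i, ∑ j, g k (x i) * g k (x j) := by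
    intro x
    rw [← hsumsq]
    have hck : ∀ k : Fin n,
        (((n : ℝ) / (2 * m * α ^ 2 * μ)) •
          ∑ i : Fin m, (f (p + μ • x i) - f (p - μ • x i)) • x i) k
          = (1 / m) * ∑ i, g k (x i) := by
      intro k
      have h1 : (((n : ℝ) / (2 * m * α ^ 2 * μ)) •
          ∑ i : Fin m, (f (p + μ • x i) - f (p - μ • x i)) • x i) k
          = ((n : ℝ) / (2 * m * α ^ 2 * μ)) *
            ((∑ i : Fin m, (f (p + μ • x i) - f (p - μ • x i)) • x i) k) := rfl
      have h2 : ((∑ i : Fin m, (f (p + μ • x i) - f (p - μ • x i)) • x i) k)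
          = ∑ i : Fin m, (f (p + μ • x i) - f (p - μ • x i)) * x i k := by
        rw [WithLp.ofLp_sum, Finset.sum_apply k Finset.univ
          (fun i => ((f (p + μ • x i) - f (p - μ • x i)) • x i).ofLp)]
        rfl
      rw [h1, h2, Finset.mul_sum, Finset.mul_sum]
      refine Finset.sum_congr rfl fun i _ => ?_
      rw [hg, hc]
      simp only
      field_simp
    have hsq : ∀ k : Fin n, ((1 / (m:ℝ)) * ∑ i, g k (x i)) ^ 2
        = (1 / (m:ℝ) ^ 2) * ∑ i, ∑ j, g k (x i) * g k (x j) := by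
      intro k
      rw [← Finset.sum_mul_sum Finset.univ Finset.univ
        (fun i => g k (x i)) (fun j => g k (x j))]
      ring
    simp_rw [hck, hsq]
    rw [← Finset.mul_sum]
  -- main computation
  have hcalc : ∫ x, ‖((n : ℝ) / (2 * m * α ^ 2 * μ)) •
          ∑ i : Fin m, (f (p + μ • x i) - f (p - μ • x i)) • x i‖ ^ 2
        ∂(Measure.pi fun _ : Fin m => σ)
      = (1 / (m:ℝ) ^ 2) * ∑ k : Fin n, ∑ i : Fin m, ∑ j : Fin m,
          (if i = j then I2 k else I1 k ^ 2) := by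
    rw [integral_congr_ae (ae_of_all _ hpt), integral_const_mul,
      integral_finset_sum _ (fun k _ => integrable_finset_sum _
        (fun i _ => integrable_finset_sum _ (fun j _ => hπint k i j)))]
    congr 1
    refine Finset.sum_congr rfl fun k _ => ?_
    rw [integral_finset_sum _ (fun i _ => integrable_finset_sum _ (fun j _ => hπint k i j))]
    refine Finset.sum_congr rfl fun i _ => ?_
    rw [integral_finset_sum _ (fun j _ => hπint k i j)]
    exact Finset.sum_congr rfl fun j _ => hterm k i j
  rw [hcalc]
  have hdouble : ∀ k : Fin n, ∑ i : Fin m, ∑ j : Fin m, (if i = j then I2 k else I1 k ^ 2)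
      = (m : ℝ) * I2 k + ((m:ℝ) ^ 2 - m) * I1 k ^ 2 := by
    intro k
    have h1 : ∀ i : Fin m, ∑ j : Fin m, (if i = j then I2 k else I1 k ^ 2)
        = I2 k + ((m:ℝ) - 1) * I1 k ^ 2 := by
      intro i
      have h2 : ∀ j : Fin m, (if i = j then I2 k else I1 k ^ 2)
          = I1 k ^ 2 + (if i = j then I2 k - I1 k ^ 2 else 0) := by
        intro j; by_cases h : i = j <;> simp [h]
      simp_rw [h2]
      rw [Finset.sum_add_distrib, Finset.sum_const, Finset.sum_ite_eq]
      simp [Finset.card_univ]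
      ring
    simp_rw [h1]
    rw [Finset.sum_const, Finset.card_univ, Fintype.card_fin, nsmul_eq_mul]
    ring
  simp_rw [hdouble]
  rw [Finset.sum_add_distrib, ← Finset.mul_sum, ← Finset.mul_sum]
  have hstep : (1 / (m:ℝ) ^ 2) * ((m:ℝ) * ∑ k, I2 k + ((m:ℝ) ^ 2 - m) * ∑ k, I1 k ^ 2)
      ≤ (1 / (m:ℝ) ^ 2) * ((m:ℝ) * B ^ 2
          + ((m:ℝ) ^ 2 - m) * (‖u‖ + Real.sqrt n * D) ^ 2) := by
    have hm1 : (1:ℝ) ≤ m := by exact_mod_cast hm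
    have hm2 : (0:ℝ) ≤ (m:ℝ) ^ 2 - m := by nlinarith [hm1]
    refine mul_le_mul_of_nonneg_left ?_ (by positivity)
    exact add_le_add (mul_le_mul_of_nonneg_left hI2sum hm0.le)
      (mul_le_mul_of_nonneg_left hI1sq hm2)
  refine hstep.trans (le_of_eq ?_)
  -- final algebra
  set s := Real.sqrt n with hs
  have hss : s * s = (n:ℝ) := Real.mul_self_sqrt hn0.le
  have hn32 : (n:ℝ) ^ ((3:ℝ)/2) = (n:ℝ) * s := by
    rw [show ((3:ℝ)/2) = 1 + 1/2 by norm_num, Real.rpow_add hn0, Real.rpow_one, hs,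
      Real.sqrt_eq_rpow]
  have hexp : (‖u‖ + s * D) ^ 2
      = ‖u‖ ^ 2 + ‖u‖ * L * ((n:ℝ) * s) * α * μ + L ^ 2 * (n:ℝ) ^ 3 * α ^ 2 * μ ^ 2 / 4 := by
    rw [hD]
    have h5 : (‖u‖ + s * (L * n * α * μ / 2)) ^ 2
        = ‖u‖ ^ 2 + ‖u‖ * L * ((n:ℝ) * s) * α * μ
          + (s * s) * (L ^ 2 * (n:ℝ) ^ 2 * α ^ 2 * μ ^ 2 / 4) := by ring
    rw [h5, hss]
    ring
  rw [hexp, ← hn32, hB]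
  field_simp
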